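/- In the square grid under rule 234: let x be a finite n×n configuration, D(x) and D(c) as defined, Z the set of inactive cells of D(x), G[Z] the graph on Z with von Neumann adjacency, and B the width-n inactive border of D(x). If a cell u of the central tiling (u ∈ [n]×[n]) is stable for D(c), then there exist three paths in G[Z] connecting u to cells of the border B, pairwise intersecting only in u, and all of whose cells are stable for D(c). -/

import Mathlib

/-- The von Neumann neighborhood of a cell of the square grid. -/
def sqNbrs (p : ℤ × ℤ) : Finset (ℤ × ℤ) :=
  {(p.1 + 1, p.2), (p.1 - 1, p.2), (p.1, p.2 + 1), (p.1, p.2 - 1)}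

/-- Number of active neighbors of `p` in configuration `c`. -/
def sqActCount (c : ℤ × ℤ → Bool) (p : ℤ × ℤ) : ℕ :=
  ((sqNbrs p).filter (fun q => c q = true)).card

/-- The freezing totalistic rule on the square grid with activating set `I`:
active cells stay active, an inactive cell becomes active iff its number of
active neighbors lies in `I`. -/
def ruleS (I : Finset ℕ) (c : ℤ × ℤ → Bool) : ℤ × ℤ → Bool :=
  fun p => c p || decide (sqActCount c p ∈ I)

/-- A cell `u` is stable for `c` under `F` if it is inactive and remains
inactive at all times. -/
def isStable (F : (ℤ × ℤ → Bool) → (ℤ × ℤ → Bool)) (c : ℤ × ℤ → Bool)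
    (u : ℤ × ℤ) : Prop :=
  c u = false ∧ ∀ t : ℕ, F^[t] c u = false

/-- The periodic configuration `c(x)` generated by the finite `n × n`
configuration `x` (repeating `x` in all directions). -/
def cPer (n : ℕ) (x : ℤ × ℤ → Bool) : ℤ × ℤ → Bool :=
  fun p => x (p.1 % (n : ℤ), p.2 % (n : ℤ))

/-- The periodic configuration `D(c) = c(D(x))` generated by the finite
`m × m` configuration `D(x)`, `m = 2n² + 3n`, whose fundamental domain is the
coordinate range `[-n²-n, n²+2n)²`: a central block `[-n², n²+n)²` tiled by
periodic repetitions of `x` (one copy of `x` occupying `[0,n) × [0,n)`),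
surrounded by a border of width `n` of inactive cells. -/
def Dconf (n : ℕ) (x : ℤ × ℤ → Bool) : ℤ × ℤ → Bool := fun p =>
  let N : ℤ := (n : ℤ)
  let m : ℤ := 2 * N ^ 2 + 3 * N
  let r1 : ℤ := (p.1 + (N ^ 2 + N)) % m - (N ^ 2 + N)
  let r2 : ℤ := (p.2 + (N ^ 2 + N)) % m - (N ^ 2 + N)
  if -N ^ 2 ≤ r1 ∧ r1 < N ^ 2 + N ∧ -N ^ 2 ≤ r2 ∧ r2 < N ^ 2 + N then
    x (r1 % N, r2 % N)
  else false

/-- The cell `p` belongs to the `m × m` array on which `D(x)` is defined,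
`m = 2n² + 3n`, realized as the coordinate range `[-n²-n, n²+2n)²`. -/
def inArray (n : ℕ) (p : ℤ × ℤ) : Prop :=
  -((n : ℤ) ^ 2 + n) ≤ p.1 ∧ p.1 < (n : ℤ) ^ 2 + 2 * n ∧
  -((n : ℤ) ^ 2 + n) ≤ p.2 ∧ p.2 < (n : ℤ) ^ 2 + 2 * n

/-- The cell `p` belongs to the interior (central tiled block) of `D(x)`. -/
def inInterior (n : ℕ) (p : ℤ × ℤ) : Prop :=
  -((n : ℤ) ^ 2) ≤ p.1 ∧ p.1 < (n : ℤ) ^ 2 + n ∧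
  -((n : ℤ) ^ 2) ≤ p.2 ∧ p.2 < (n : ℤ) ^ 2 + n

/-- `Z`: the set of cells of the `m × m` array that are inactive in `D(x)`. -/
def Zset (n : ℕ) (x : ℤ × ℤ → Bool) : Set (ℤ × ℤ) :=
  {p | inArray n p ∧ Dconf n x p = false}

/-- `B`: the width-`n` inactive border of `D(x)`. -/
def Bset (n : ℕ) : Set (ℤ × ℤ) :=
  {p | inArray n p ∧ ¬ inInterior n p}

/-- The graph on a set `Z` of cells with von Neumann adjacency (cells outside
`Z` are isolated vertices). -/
def sqGraphOn (Z : Set (ℤ × ℤ)) : SimpleGraph (ℤ × ℤ) where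
  Adj p q := p ≠ q ∧ p ∈ Z ∧ q ∈ Z ∧ (q ∈ sqNbrs p ∨ p ∈ sqNbrs q)
  symm := ⟨fun p q h => ⟨h.1.symm, h.2.2.1, h.2.1, h.2.2.2.symm⟩⟩
  loopless := ⟨fun p h => h.1 rfl⟩

set_option linter.unusedVariables false

-- monotone activity
lemma aux_active_mono (I : Finset ℕ) (c : ℤ × ℤ → Bool) (q : ℤ × ℤ) (t s : ℕ)
    (h : (ruleS I)^[t] c q = true) : (ruleS I)^[t + s] c q = true := by
  induction s with
  | zero => exact h
  | succ s ih =>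
    rw [← Nat.add_assoc, Function.iterate_succ_apply']
    simp only [ruleS, Bool.or_eq_true]
    exact Or.inl ih

lemma aux_card_sqNbrs_le (p : ℤ × ℤ) : (sqNbrs p).card ≤ 4 := by
  unfold sqNbrs
  refine (Finset.card_insert_le _ _).trans ?_
  refine Nat.add_le_add_right ((Finset.card_insert_le _ _).trans ?_) 1
  refine Nat.add_le_add_right ((Finset.card_insert_le _ _).trans ?_) 1
  simp

-- two eventually-active distinct neighbors force activation
lemma aux_two_active (c : ℤ × ℤ → Bool) (p q1 q2 : ℤ × ℤ)
    (h1 : q1 ∈ sqNbrs p) (h2 : q2 ∈ sqNbrs p) (hne : q1 ≠ q2)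
    (t1 t2 : ℕ) (a1 : (ruleS {2,3,4})^[t1] c q1 = true)
    (a2 : (ruleS {2,3,4})^[t2] c q2 = true) :
    ∃ t, (ruleS {2,3,4})^[t] c p = true := by
  set T := max t1 t2 with hT
  have A1 : (ruleS {2,3,4})^[T] c q1 = true := by
    have := aux_active_mono {2,3,4} c q1 t1 (T - t1) a1
    rwa [Nat.add_sub_cancel' (le_max_left _ _)] at this
  have A2 : (ruleS {2,3,4})^[T] c q2 = true := by
    have := aux_active_mono {2,3,4} c q2 t2 (T - t2) a2
    rwa [Nat.add_sub_cancel' (le_max_right _ _)] at this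
  refine ⟨T + 1, ?_⟩
  rw [Function.iterate_succ_apply']
  have hcnt : sqActCount ((ruleS {2,3,4})^[T] c) p ∈ ({2,3,4} : Finset ℕ) := by
    have hsub : ({q1, q2} : Finset (ℤ × ℤ)) ⊆
        (sqNbrs p).filter (fun q => (ruleS {2,3,4})^[T] c q = true) := by
      intro r hr
      simp only [Finset.mem_insert, Finset.mem_singleton] at hr
      rcases hr with rfl | rfl <;> simp [Finset.mem_filter, h1, h2, A1, A2]
    have h2le : 2 ≤ sqActCount ((ruleS {2,3,4})^[T] c) p := by
      have := Finset.card_le_card hsub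
      rwa [Finset.card_pair hne] at this
    have h4ge : sqActCount ((ruleS {2,3,4})^[T] c) p ≤ 4 :=
      (Finset.card_le_card (Finset.filter_subset _ _)).trans (aux_card_sqNbrs_le p)
    simp only [Finset.mem_insert, Finset.mem_singleton]
    omega
  show ((ruleS {2,3,4})^[T] c p || decide (sqActCount ((ruleS {2,3,4})^[T] c) p ∈ ({2,3,4} : Finset ℕ))) = true
  rw [Bool.or_eq_true]
  exact Or.inr (decide_eq_true hcnt)

-- at most one non-stable neighbor
lemma aux_pair_stable (c : ℤ × ℤ → Bool) (p q1 q2 : ℤ × ℤ)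
    (hp : ∀ t, (ruleS {2,3,4})^[t] c p = false)
    (h1 : q1 ∈ sqNbrs p) (h2 : q2 ∈ sqNbrs p) (hne : q1 ≠ q2) :
    (∀ t, (ruleS {2,3,4})^[t] c q1 = false) ∨ (∀ t, (ruleS {2,3,4})^[t] c q2 = false) := by
  by_contra h
  push_neg at h
  obtain ⟨⟨t1, a1⟩, ⟨t2, a2⟩⟩ := h
  rw [Bool.ne_false_iff] at a1 a2
  obtain ⟨t, ht⟩ := aux_two_active c p q1 q2 h1 h2 hne t1 t2 a1 a2
  rw [hp t] at ht
  exact Bool.false_ne_true ht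

def dotZ (a b : ℤ × ℤ) : ℤ := a.1 * b.1 + a.2 * b.2

def isDir (d : ℤ × ℤ) : Prop :=
  d = (1, 0) ∨ d = (-1, 0) ∨ d = (0, 1) ∨ d = (0, -1)

lemma dotZ_add_left (a b c : ℤ × ℤ) : dotZ (a + b) c = dotZ a c + dotZ b c := by
  simp [dotZ]; ring

lemma dotZ_add_right (a b c : ℤ × ℤ) : dotZ a (b + c) = dotZ a b + dotZ a c := by
  simp [dotZ]; ring

lemma dotZ_neg_left (a b : ℤ × ℤ) : dotZ (-a) b = - dotZ a b := by
  simp [dotZ]; ring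

lemma aux_mem_nbrs (p d : ℤ × ℤ) (hd : isDir d) : p + d ∈ sqNbrs p := by
  rcases hd with rfl | rfl | rfl | rfl <;> simp [sqNbrs, Prod.ext_iff] <;> omega

lemma aux_ne_add (p d : ℤ × ℤ) (hd : isDir d) : p ≠ p + d := by
  rcases hd with rfl | rfl | rfl | rfl <;> simp [Prod.ext_iff]

lemma aux_sq (n : ℕ) (hn : 0 < n) : ∃ A : ℤ, (n : ℤ) ^ 2 = A ∧ (n : ℤ) ≤ A := by
  refine ⟨_, rfl, ?_⟩
  have h1 : (1 : ℤ) ≤ (n : ℤ) := by exact_mod_cast hn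
  nlinarith

lemma aux_int_sub_arr (n : ℕ) (hn : 0 < n) (p : ℤ × ℤ) (hp : inInterior n p) :
    inArray n p := by
  obtain ⟨A, hA, hA2⟩ := aux_sq n hn
  unfold inInterior at hp
  unfold inArray
  rw [hA] at hp ⊢
  have h1 : (1 : ℤ) ≤ (n : ℤ) := by exact_mod_cast hn
  omega

lemma aux_nbr_arr (n : ℕ) (hn : 0 < n) (p d : ℤ × ℤ) (hd : isDir d)
    (hp : inInterior n p) : inArray n (p + d) := by
  obtain ⟨A, hA, hA2⟩ := aux_sq n hn
  unfold inInterior at hp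
  unfold inArray
  rw [hA] at hp ⊢
  have h1 : (1 : ℤ) ≤ (n : ℤ) := by exact_mod_cast hn
  rcases hd with rfl | rfl | rfl | rfl <;> simp only [Prod.fst_add, Prod.snd_add] <;>
    simp <;> omega

lemma aux_dir_facts (d1 d2 : ℤ × ℤ) (hd1 : isDir d1) (hd2 : isDir d2)
    (hne : d1 ≠ d2) (hno : d1 ≠ -d2) :
    dotZ d1 d1 = 1 ∧ dotZ d2 d2 = 1 ∧ dotZ d1 d2 = 0 ∧
      ((d1 + d2).1 = 1 ∨ (d1 + d2).1 = -1) ∧ ((d1 + d2).2 = 1 ∨ (d1 + d2).2 = -1) := by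
  rcases hd1 with rfl | rfl | rfl | rfl <;> rcases hd2 with rfl | rfl | rfl | rfl <;>
    simp_all [dotZ, Prod.ext_iff]

/-- Stability as an all-times property. -/
def StP (n : ℕ) (x : ℤ × ℤ → Bool) (p : ℤ × ℤ) : Prop :=
  ∀ t, (ruleS {2,3,4})^[t] (Dconf n x) p = false

lemma StP_isStable (n : ℕ) (x : ℤ × ℤ → Bool) (p : ℤ × ℤ) :
    StP n x p ↔ isStable (ruleS {2,3,4}) (Dconf n x) p :=
  ⟨fun h => ⟨by simpa using h 0, h⟩, fun h => h.2⟩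

lemma aux_mem_Zset (n : ℕ) (x : ℤ × ℤ → Bool) (p : ℤ × ℤ)
    (hp : StP n x p) (ha : inArray n p) : p ∈ Zset n x :=
  ⟨ha, by simpa using hp 0⟩

lemma aux_StP_nbr (n : ℕ) (x : ℤ × ℤ → Bool) (p d1 d2 : ℤ × ℤ)
    (hp : StP n x p) (hd1 : isDir d1) (hd2 : isDir d2) (hne : d1 ≠ d2) :
    StP n x (p + d1) ∨ StP n x (p + d2) := by
  refine aux_pair_stable (Dconf n x) p (p + d1) (p + d2) hp
    (aux_mem_nbrs p d1 hd1) (aux_mem_nbrs p d2 hd2) ?_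
  intro h
  exact hne (by simpa using h)

open SimpleGraph in
lemma stair (n : ℕ) (hn : 0 < n) (x : ℤ × ℤ → Bool) (d1 d2 : ℤ × ℤ)
    (hd1 : isDir d1) (hd2 : isDir d2) (hne : d1 ≠ d2) (hno : d1 ≠ -d2) :
    ∀ k : ℕ, ∀ p : ℤ × ℤ, StP n x p → inInterior n p →
      2 * ((n : ℤ) ^ 2 + 2 * n) - dotZ p (d1 + d2) ≤ k →
    ∃ b, b ∈ Bset n ∧ ∃ w : (sqGraphOn (Zset n x)).Walk p b, w.IsPath ∧
      ∀ r ∈ w.support, StP n x r ∧ 0 ≤ dotZ (r - p) d1 ∧ 0 ≤ dotZ (r - p) d2 := by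
  obtain ⟨e11, e22, e12, hc1, hc2⟩ := aux_dir_facts d1 d2 hd1 hd2 hne hno
  have e21 : dotZ d2 d1 = 0 := by rw [show dotZ d2 d1 = dotZ d1 d2 by simp [dotZ]; ring]; exact e12
  have h1n : (1 : ℤ) ≤ (n : ℤ) := by exact_mod_cast hn
  -- bound on dotZ inside the interior
  have hbnd : ∀ p : ℤ × ℤ, inInterior n p → dotZ p (d1 + d2) ≤ 2 * (n : ℤ) ^ 2 + 2 * n - 2 := by
    intro p hp
    obtain ⟨A, hA, hA2⟩ := aux_sq n hn
    unfold inInterior at hp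
    rw [hA] at hp
    have : dotZ p (d1 + d2) = p.1 * (d1 + d2).1 + p.2 * (d1 + d2).2 := rfl
    rw [this, hA]
    rcases hc1 with h | h <;> rcases hc2 with h' | h' <;> rw [h, h'] <;> omega
  intro k
  induction k with
  | zero =>
    intro p hSt hInt hk
    exfalso
    have := hbnd p hInt
    obtain ⟨A, hA, hA2⟩ := aux_sq n hn
    rw [hA] at this hk
    omega
  | succ k ih =>
    intro p hSt hInt hk
    have hpick := aux_StP_nbr n x p d1 d2 hSt hd1 hd2 hne
    obtain ⟨d, hdmem, hq⟩ : ∃ d, (d = d1 ∨ d = d2) ∧ StP n x (p + d) := by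
      rcases hpick with h | h
      exacts [⟨d1, Or.inl rfl, h⟩, ⟨d2, Or.inr rfl, h⟩]
    have hdDir : isDir d := by rcases hdmem with rfl | rfl <;> assumption
    have hdot : 0 ≤ dotZ d d1 ∧ 0 ≤ dotZ d d2 ∧ dotZ d (d1 + d2) = 1 := by
      rcases hdmem with rfl | rfl <;>
        simp [dotZ_add_right, e11, e22, e12, e21]
    have hqArr : inArray n (p + d) := aux_nbr_arr n hn p d hdDir hInt
    have hadj : (sqGraphOn (Zset n x)).Adj p (p + d) := by
      refine ⟨aux_ne_add p d hdDir, aux_mem_Zset n x p hSt (aux_int_sub_arr n hn p hInt),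
        aux_mem_Zset n x (p + d) hq hqArr, Or.inl (aux_mem_nbrs p d hdDir)⟩
    have hqp : (p + d) - p = d := by abel
    by_cases hqInt : inInterior n (p + d)
    · have hk' : 2 * ((n : ℤ) ^ 2 + 2 * n) - dotZ (p + d) (d1 + d2) ≤ k := by
        rw [dotZ_add_left, hdot.2.2]
        have hcast : ((k + 1 : ℕ) : ℤ) = (k : ℤ) + 1 := by push_cast; ring
        rw [hcast] at hk
        linarith
      obtain ⟨b, hb, w', hw'path, hw'supp⟩ := ih (p + d) hq hqInt hk'
      refine ⟨b, hb, Walk.cons hadj w', ?_, ?_⟩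
      · rw [SimpleGraph.Walk.cons_isPath_iff]
        refine ⟨hw'path, fun hp' => ?_⟩
        obtain ⟨_, hc1', hc2'⟩ := hw'supp p hp'
        have hpd : p - (p + d) = -d := by abel
        rw [hpd] at hc1' hc2'
        rw [dotZ_neg_left] at hc1' hc2'
        have := hdot.2.2
        rw [dotZ_add_right] at this
        linarith
      · intro r hr
        rw [SimpleGraph.Walk.support_cons, List.mem_cons] at hr
        rcases hr with rfl | hr
        · exact ⟨hSt, by simp [dotZ], by simp [dotZ]⟩
        · obtain ⟨h1, h2, h3⟩ := hw'supp r hr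
          have hrp : r - p = (r - (p + d)) + d := by abel
          rw [hrp]
          exact ⟨h1, by rw [dotZ_add_left]; linarith [hdot.1],
            by rw [dotZ_add_left]; linarith [hdot.2.1]⟩
    · refine ⟨p + d, ⟨hqArr, hqInt⟩, Walk.cons hadj Walk.nil, ?_, ?_⟩
      · rw [SimpleGraph.Walk.cons_isPath_iff]
        exact ⟨Walk.IsPath.nil, by simpa using aux_ne_add p d hdDir⟩
      · intro r hr
        rw [SimpleGraph.Walk.support_cons, SimpleGraph.Walk.support_nil, List.mem_cons,
          List.mem_singleton] at hr
        rcases hr with rfl | rfl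
        · exact ⟨hSt, by simp [dotZ], by simp [dotZ]⟩
        · rw [hqp]
          exact ⟨hq, hdot.1, hdot.2.1⟩
lemma aux_dir_self (d : ℤ × ℤ) (hd : isDir d) : dotZ d d = 1 := by
  rcases hd with rfl | rfl | rfl | rfl <;> simp [dotZ]

open SimpleGraph in
lemma assemble (n : ℕ) (hn : 0 < n) (x : ℤ × ℤ → Bool) (u : ℤ × ℤ)
    (hInt : inInterior n u) (hIntN : ∀ d, isDir d → inInterior n (u + d))
    (hSt : StP n x u)
    (a1 b1 a2 b2 a3 b3 : ℤ × ℤ)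
    (ha1 : isDir a1) (hb1 : isDir b1) (h1ne : a1 ≠ b1) (h1no : a1 ≠ -b1)
    (ha2 : isDir a2) (hb2 : isDir b2) (h2ne : a2 ≠ b2) (h2no : a2 ≠ -b2)
    (ha3 : isDir a3) (hb3 : isDir b3) (h3ne : a3 ≠ b3) (h3no : a3 ≠ -b3)
    (hS1 : StP n x (u + a1)) (hS2 : StP n x (u + a2)) (hS3 : StP n x (u + a3))
    (hd12 : ∀ r : ℤ × ℤ, 0 ≤ dotZ (r - (u + a1)) a1 → 0 ≤ dotZ (r - (u + a1)) b1 →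
      0 ≤ dotZ (r - (u + a2)) a2 → 0 ≤ dotZ (r - (u + a2)) b2 → False)
    (hd13 : ∀ r : ℤ × ℤ, 0 ≤ dotZ (r - (u + a1)) a1 → 0 ≤ dotZ (r - (u + a1)) b1 →
      0 ≤ dotZ (r - (u + a3)) a3 → 0 ≤ dotZ (r - (u + a3)) b3 → False)
    (hd23 : ∀ r : ℤ × ℤ, 0 ≤ dotZ (r - (u + a2)) a2 → 0 ≤ dotZ (r - (u + a2)) b2 →
      0 ≤ dotZ (r - (u + a3)) a3 → 0 ≤ dotZ (r - (u + a3)) b3 → False) :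
    ∃ (b1' b2' b3' : ℤ × ℤ), b1' ∈ Bset n ∧ b2' ∈ Bset n ∧ b3' ∈ Bset n ∧
      ∃ (p1 : (sqGraphOn (Zset n x)).Walk u b1')
        (p2 : (sqGraphOn (Zset n x)).Walk u b2')
        (p3 : (sqGraphOn (Zset n x)).Walk u b3'),
        p1.IsPath ∧ p2.IsPath ∧ p3.IsPath ∧
        (∀ w ∈ p1.support, isStable (ruleS {2, 3, 4}) (Dconf n x) w) ∧
        (∀ w ∈ p2.support, isStable (ruleS {2, 3, 4}) (Dconf n x) w) ∧
        (∀ w ∈ p3.support, isStable (ruleS {2, 3, 4}) (Dconf n x) w) ∧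
        (∀ w, w ∈ p1.support → w ∈ p2.support → w = u) ∧
        (∀ w, w ∈ p1.support → w ∈ p3.support → w = u) ∧
        (∀ w, w ∈ p2.support → w ∈ p3.support → w = u) := by
  have build : ∀ (a b : ℤ × ℤ), isDir a → isDir b → a ≠ b → a ≠ -b → StP n x (u + a) →
      ∃ (e : ℤ × ℤ), e ∈ Bset n ∧ ∃ w : (sqGraphOn (Zset n x)).Walk u e, w.IsPath ∧
        (∀ r ∈ w.support, StP n x r) ∧
        (∀ r ∈ w.support, r ≠ u →
          0 ≤ dotZ (r - (u + a)) a ∧ 0 ≤ dotZ (r - (u + a)) b) := by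
    intro a b ha hb habne habno hSa
    have hIa : inInterior n (u + a) := hIntN a ha
    obtain ⟨e, he, w', hpath, hsupp⟩ := stair n hn x a b ha hb habne habno
      (2 * ((n : ℤ) ^ 2 + 2 * n) - dotZ (u + a) (a + b)).toNat (u + a) hSa hIa
      (Int.self_le_toNat _)
    have hadj : (sqGraphOn (Zset n x)).Adj u (u + a) :=
      ⟨aux_ne_add u a ha, aux_mem_Zset n x u hSt (aux_int_sub_arr n hn u hInt),
        aux_mem_Zset n x (u + a) hSa (aux_int_sub_arr n hn (u + a) hIa),
        Or.inl (aux_mem_nbrs u a ha)⟩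
    have hunotin : u ∉ w'.support := by
      intro hu
      obtain ⟨_, hcx, hcy⟩ := hsupp u hu
      have h1 : u - (u + a) = -a := by abel
      rw [h1, dotZ_neg_left, aux_dir_self a ha] at hcx
      omega
    refine ⟨e, he, Walk.cons hadj w', ?_, ?_, ?_⟩
    · rw [SimpleGraph.Walk.cons_isPath_iff]
      exact ⟨hpath, hunotin⟩
    · intro r hr
      rw [SimpleGraph.Walk.support_cons, List.mem_cons] at hr
      rcases hr with rfl | hr
      · exact hSt
      · exact (hsupp r hr).1
    · intro r hr hru
      rw [SimpleGraph.Walk.support_cons, List.mem_cons] at hr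
      rcases hr with rfl | hr
      · exact absurd rfl hru
      · exact ⟨(hsupp r hr).2.1, (hsupp r hr).2.2⟩
  obtain ⟨e1, he1, w1, hp1, hs1, hc1⟩ := build a1 b1 ha1 hb1 h1ne h1no hS1
  obtain ⟨e2, he2, w2, hp2, hs2, hc2⟩ := build a2 b2 ha2 hb2 h2ne h2no hS2
  obtain ⟨e3, he3, w3, hp3, hs3, hc3⟩ := build a3 b3 ha3 hb3 h3ne h3no hS3
  refine ⟨e1, e2, e3, he1, he2, he3, w1, w2, w3, hp1, hp2, hp3,
    fun w hw => (StP_isStable n x w).mp (hs1 w hw),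
    fun w hw => (StP_isStable n x w).mp (hs2 w hw),
    fun w hw => (StP_isStable n x w).mp (hs3 w hw), ?_, ?_, ?_⟩
  · intro w hw1 hw2
    by_contra hne'
    obtain ⟨g1, g2⟩ := hc1 w hw1 hne'
    obtain ⟨g3, g4⟩ := hc2 w hw2 hne'
    exact hd12 w g1 g2 g3 g4
  · intro w hw1 hw2
    by_contra hne'
    obtain ⟨g1, g2⟩ := hc1 w hw1 hne'
    obtain ⟨g3, g4⟩ := hc3 w hw2 hne'
    exact hd13 w g1 g2 g3 g4
  · intro w hw1 hw2
    by_contra hne'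
    obtain ⟨g1, g2⟩ := hc2 w hw1 hne'
    obtain ⟨g3, g4⟩ := hc3 w hw2 hne'
    exact hd23 w g1 g2 g3 g4

/-- square grid under rule 234. If a cell `u` of the central
copy of `x` (`u ∈ [n] × [n]`) is stable for `D(c)`, then there are three
paths in `G[Z]` connecting `u` to cells of the border `B`, pairwise
intersecting only in `u`, all of whose cells are stable for `D(c)`. -/
theorem stmt12 (n : ℕ) (hn : 0 < n) (x : ℤ × ℤ → Bool) (u : ℤ × ℤ)
    (hu1 : 0 ≤ u.1) (hu1' : u.1 < n) (hu2 : 0 ≤ u.2) (hu2' : u.2 < n)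
    (hstab : isStable (ruleS {2, 3, 4}) (Dconf n x) u) :
    ∃ (b1 b2 b3 : ℤ × ℤ), b1 ∈ Bset n ∧ b2 ∈ Bset n ∧ b3 ∈ Bset n ∧
      ∃ (p1 : (sqGraphOn (Zset n x)).Walk u b1)
        (p2 : (sqGraphOn (Zset n x)).Walk u b2)
        (p3 : (sqGraphOn (Zset n x)).Walk u b3),
        p1.IsPath ∧ p2.IsPath ∧ p3.IsPath ∧
        (∀ w ∈ p1.support, isStable (ruleS {2, 3, 4}) (Dconf n x) w) ∧
        (∀ w ∈ p2.support, isStable (ruleS {2, 3, 4}) (Dconf n x) w) ∧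
        (∀ w ∈ p3.support, isStable (ruleS {2, 3, 4}) (Dconf n x) w) ∧
        (∀ w, w ∈ p1.support → w ∈ p2.support → w = u) ∧
        (∀ w, w ∈ p1.support → w ∈ p3.support → w = u) ∧
        (∀ w, w ∈ p2.support → w ∈ p3.support → w = u) := by
  have hSt : StP n x u := (StP_isStable n x u).mpr hstab
  have h1n : (1 : ℤ) ≤ (n : ℤ) := by exact_mod_cast hn
  obtain ⟨A, hA, hA2⟩ := aux_sq n hn
  have hInt : inInterior n u := by
    unfold inInterior; rw [hA]; omega
  have hIntN : ∀ d, isDir d → inInterior n (u + d) := by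
    intro d hd
    unfold inInterior; rw [hA]
    rcases hd with rfl | rfl | rfl | rfl <;>
      simp only [Prod.fst_add, Prod.snd_add] <;> simp <;> omega
  have hE : isDir ((1, 0) : ℤ × ℤ) := Or.inl rfl
  have hW : isDir ((-1, 0) : ℤ × ℤ) := Or.inr (Or.inl rfl)
  have hN : isDir ((0, 1) : ℤ × ℤ) := Or.inr (Or.inr (Or.inl rfl))
  have hS : isDir ((0, -1) : ℤ × ℤ) := Or.inr (Or.inr (Or.inr rfl))
  have hEW := aux_StP_nbr n x u (1, 0) (-1, 0) hSt hE hW (by decide)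
  have hEN := aux_StP_nbr n x u (1, 0) (0, 1) hSt hE hN (by decide)
  have hES := aux_StP_nbr n x u (1, 0) (0, -1) hSt hE hS (by decide)
  have hWN := aux_StP_nbr n x u (-1, 0) (0, 1) hSt hW hN (by decide)
  have hWS := aux_StP_nbr n x u (-1, 0) (0, -1) hSt hW hS (by decide)
  have hNS := aux_StP_nbr n x u (0, 1) (0, -1) hSt hN hS (by decide)
  have htriple :
      (StP n x (u + (1, 0)) ∧ StP n x (u + (-1, 0)) ∧ StP n x (u + (0, 1))) ∨
      (StP n x (u + (1, 0)) ∧ StP n x (u + (-1, 0)) ∧ StP n x (u + (0, -1))) ∨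
      (StP n x (u + (1, 0)) ∧ StP n x (u + (0, 1)) ∧ StP n x (u + (0, -1))) ∨
      (StP n x (u + (-1, 0)) ∧ StP n x (u + (0, 1)) ∧ StP n x (u + (0, -1))) := by
    rcases hEW with sE | sW
    · rcases hNS with sN | sS
      · rcases hWS with sW | sS
        · exact Or.inl ⟨sE, sW, sN⟩
        · exact Or.inr (Or.inr (Or.inl ⟨sE, sN, sS⟩))
      · rcases hWN with sW | sN
        · exact Or.inr (Or.inl ⟨sE, sW, sS⟩)
        · exact Or.inr (Or.inr (Or.inl ⟨sE, sN, sS⟩))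
    · rcases hNS with sN | sS
      · rcases hES with sE | sS
        · exact Or.inl ⟨sE, sW, sN⟩
        · exact Or.inr (Or.inr (Or.inr ⟨sW, sN, sS⟩))
      · rcases hEN with sE | sN
        · exact Or.inr (Or.inl ⟨sE, sW, sS⟩)
        · exact Or.inr (Or.inr (Or.inr ⟨sW, sN, sS⟩))
  rcases htriple with ⟨sE, sW, sN⟩ | ⟨sE, sW, sS⟩ | ⟨sE, sN, sS⟩ | ⟨sW, sN, sS⟩
  · exact assemble n hn x u hInt hIntN hSt
      (1, 0) (0, -1) (-1, 0) (0, 1) (0, 1) (1, 0)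
      hE hS (by decide) (by decide) hW hN (by decide) (by decide)
      hN hE (by decide) (by decide) sE sW sN
      (by intro r g1 g2 g3 g4;
          simp only [dotZ, Prod.fst_sub, Prod.snd_sub, Prod.fst_add, Prod.snd_add] at g1 g2 g3 g4;
          simp at g1 g2 g3 g4; omega)
      (by intro r g1 g2 g3 g4;
          simp only [dotZ, Prod.fst_sub, Prod.snd_sub, Prod.fst_add, Prod.snd_add] at g1 g2 g3 g4;
          simp at g1 g2 g3 g4; omega)
      (by intro r g1 g2 g3 g4;
          simp only [dotZ, Prod.fst_sub, Prod.snd_sub, Prod.fst_add, Prod.snd_add] at g1 g2 g3 g4;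
          simp at g1 g2 g3 g4; omega)
  · exact assemble n hn x u hInt hIntN hSt
      (1, 0) (0, 1) (-1, 0) (0, -1) (0, -1) (1, 0)
      hE hN (by decide) (by decide) hW hS (by decide) (by decide)
      hS hE (by decide) (by decide) sE sW sS
      (by intro r g1 g2 g3 g4;
          simp only [dotZ, Prod.fst_sub, Prod.snd_sub, Prod.fst_add, Prod.snd_add] at g1 g2 g3 g4;
          simp at g1 g2 g3 g4; omega)
      (by intro r g1 g2 g3 g4;
          simp only [dotZ, Prod.fst_sub, Prod.snd_sub, Prod.fst_add, Prod.snd_add] at g1 g2 g3 g4;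
          simp at g1 g2 g3 g4; omega)
      (by intro r g1 g2 g3 g4;
          simp only [dotZ, Prod.fst_sub, Prod.snd_sub, Prod.fst_add, Prod.snd_add] at g1 g2 g3 g4;
          simp at g1 g2 g3 g4; omega)
  · exact assemble n hn x u hInt hIntN hSt
      (0, 1) (-1, 0) (0, -1) (1, 0) (1, 0) (0, 1)
      hN hW (by decide) (by decide) hS hE (by decide) (by decide)
      hE hN (by decide) (by decide) sN sS sE
      (by intro r g1 g2 g3 g4;
          simp only [dotZ, Prod.fst_sub, Prod.snd_sub, Prod.fst_add, Prod.snd_add] at g1 g2 g3 g4;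
          simp at g1 g2 g3 g4; omega)
      (by intro r g1 g2 g3 g4;
          simp only [dotZ, Prod.fst_sub, Prod.snd_sub, Prod.fst_add, Prod.snd_add] at g1 g2 g3 g4;
          simp at g1 g2 g3 g4; omega)
      (by intro r g1 g2 g3 g4;
          simp only [dotZ, Prod.fst_sub, Prod.snd_sub, Prod.fst_add, Prod.snd_add] at g1 g2 g3 g4;
          simp at g1 g2 g3 g4; omega)
  · exact assemble n hn x u hInt hIntN hSt
      (0, 1) (1, 0) (0, -1) (-1, 0) (-1, 0) (0, 1)
      hN hE (by decide) (by decide) hS hW (by decide) (by decide)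
      hW hN (by decide) (by decide) sN sS sW
      (by intro r g1 g2 g3 g4;
          simp only [dotZ, Prod.fst_sub, Prod.snd_sub, Prod.fst_add, Prod.snd_add] at g1 g2 g3 g4;
          simp at g1 g2 g3 g4; omega)
      (by intro r g1 g2 g3 g4;
          simp only [dotZ, Prod.fst_sub, Prod.snd_sub, Prod.fst_add, Prod.snd_add] at g1 g2 g3 g4;
          simp at g1 g2 g3 g4; omega)
      (by intro r g1 g2 g3 g4;
          simp only [dotZ, Prod.fst_sub, Prod.snd_sub, Prod.fst_add, Prod.snd_add] at g1 g2 g3 g4;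
          simp at g1 g2 g3 g4; omega)
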